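/- Let F : [0,1]^n → ℝ≥0 be a differentiable DR-submodular function. Then for every x, y ∈ [0,1]^n it holds that F(x ∨ y) ≥ (1 − ‖x‖_∞) F(y), where (x ∨ y)_i = max{x_i, y_i} and ‖x‖_∞ = max_i |x_i|. -/

import Mathlib

/-- For a nonnegative differentiable DR-submodular `F` and all
`x, y ∈ [0,1]^n`, `F (x ∨ y) ≥ (1 - ‖x‖_∞) * F y`. -/
theorem dr_submodular_join_ge
    (n : ℕ) (hn : 0 < n) (F : EuclideanSpace ℝ (Fin n) → ℝ)
    (gradF : EuclideanSpace ℝ (Fin n) → EuclideanSpace ℝ (Fin n))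
    (box : Set (EuclideanSpace ℝ (Fin n)))
    (hbox : box = {x | ∀ i, x i ∈ Set.Icc (0 : ℝ) 1})
    (hF0 : ∀ x ∈ box, 0 ≤ F x)
    (hdiff : ∀ x ∈ box, HasGradientWithinAt F (gradF x) box x)
    (hDR : ∀ x ∈ box, ∀ y ∈ box, (∀ i, y i ≤ x i) → ∀ i, gradF x i ≤ gradF y i) :
    ∀ x ∈ box, ∀ y ∈ box,
      (1 - ⨆ i, |x i|) * F y
        ≤ F ((WithLp.toLp 2 (fun i => max (x i) (y i)) : EuclideanSpace ℝ (Fin n))) := by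
  subst hbox
  intro x hx y hy
  simp only [Set.mem_setOf_eq, Set.mem_Icc] at hx hy
  set s : ℝ := ⨆ i, |x i| with hs
  have hsx : ∀ i, x i ≤ s := by
    intro i
    have := le_ciSup (f := fun i => |x i|) (Set.Finite.bddAbove (Set.finite_range _)) i
    calc x i ≤ |x i| := le_abs_self _
      _ ≤ s := this
  have hs0 : 0 ≤ s := le_trans (hx ⟨0, hn⟩).1 (hsx ⟨0, hn⟩)
  have hjoin : (WithLp.toLp 2 (fun i => max (x i) (y i)) : EuclideanSpace ℝ (Fin n)) ∈
      {x : EuclideanSpace ℝ (Fin n) | ∀ i, x i ∈ Set.Icc (0 : ℝ) 1} := by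
    intro i
    exact ⟨le_max_of_le_left (hx i).1, max_le (hx i).2 (hy i).2⟩
  by_cases hs1 : 1 ≤ s
  · have h1 : (1 - s) * F y ≤ 0 :=
      mul_nonpos_of_nonpos_of_nonneg (by linarith) (hF0 y hy)
    exact h1.trans (hF0 _ hjoin)
  push_neg at hs1
  rcases eq_or_lt_of_le hs0 with h0 | hspos
  · -- s = 0, so x = 0 and the join is y
    have hx0 : ∀ i, x i = 0 := fun i => le_antisymm (h0 ▸ hsx i) (hx i).1
    have hjy : (WithLp.toLp 2 (fun i => max (x i) (y i)) : EuclideanSpace ℝ (Fin n)) = y := by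
      ext i
      simp [hx0 i, max_eq_right (hy i).1]
    rw [hjy, ← h0]
    simp
  -- main case : 0 < s < 1
  set u : EuclideanSpace ℝ (Fin n) := WithLp.toLp 2 (fun i => max (x i) (y i) - y i) with hu
  have hu0 : ∀ i, 0 ≤ u i := fun i => by simp [hu, (le_max_right (x i) (y i))]
  have hus : ∀ i, u i ≤ s * (1 - y i) := by
    intro i
    rcases le_total (x i) (y i) with h | h
    · have : u i = 0 := by simp [hu, max_eq_right h]
      rw [this]
      exact mul_nonneg hs0 (by linarith [(hy i).2])
    · have : u i = x i - y i := by simp [hu, max_eq_left h]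
      rw [this]
      nlinarith [hsx i, (hy i).1, hs1.le]
  set z : ℝ → EuclideanSpace ℝ (Fin n) := fun t => y + t • u with hzdef
  have hzapp : ∀ t i, z t i = y i + t * u i := by
    intro t i
    simp [hzdef]
  have hz : ∀ t ∈ Set.Icc (0 : ℝ) s⁻¹,
      z t ∈ {x : EuclideanSpace ℝ (Fin n) | ∀ i, x i ∈ Set.Icc (0 : ℝ) 1} := by
    intro t ht i
    rw [Set.mem_Icc, hzapp]
    constructor
    · exact add_nonneg (hy i).1 (mul_nonneg ht.1 (hu0 i))
    · have h1 : t * u i ≤ s⁻¹ * (s * (1 - y i)) :=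
        mul_le_mul ht.2 (hus i) (hu0 i) (inv_nonneg.2 hs0)
      have h2 : s⁻¹ * (s * (1 - y i)) = 1 - y i := by
        field_simp
      linarith [h1, h2 ▸ h1]
  -- g = F ∘ z has derivative ⟪gradF (z t), u⟫ within Icc 0 s⁻¹
  have hmaps : Set.MapsTo z (Set.Icc (0 : ℝ) s⁻¹)
      {x : EuclideanSpace ℝ (Fin n) | ∀ i, x i ∈ Set.Icc (0 : ℝ) 1} := fun t ht => hz t ht
  have hzderiv : ∀ t : ℝ, HasDerivWithinAt z u (Set.Icc (0 : ℝ) s⁻¹) t := by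
    intro t
    have : HasDerivAt (fun t : ℝ => y + t • u) ((1 : ℝ) • u) t :=
      ((hasDerivAt_id t).smul_const u).const_add y
    rw [one_smul] at this
    exact this.hasDerivWithinAt
  have hderiv : ∀ t ∈ Set.Icc (0 : ℝ) s⁻¹,
      HasDerivWithinAt (F ∘ z) (inner ℝ (gradF (z t)) u : ℝ) (Set.Icc (0 : ℝ) s⁻¹) t := by
    intro t ht
    have hF' : HasFDerivWithinAt F
        ((InnerProductSpace.toDual ℝ (EuclideanSpace ℝ (Fin n))) (gradF (z t)))
        {x : EuclideanSpace ℝ (Fin n) | ∀ i, x i ∈ Set.Icc (0 : ℝ) 1} (z t) :=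
      hdiff (z t) (hz t ht)
    have := hF'.comp_hasDerivWithinAt t (hzderiv t) hmaps
    simpa [InnerProductSpace.toDual_apply_apply] using this
  have hIcc : (0 : ℝ) < s⁻¹ := inv_pos.2 hspos
  have hint : interior (Set.Icc (0 : ℝ) s⁻¹) = Set.Ioo 0 s⁻¹ := interior_Icc
  -- concavity of g on [0, s⁻¹]
  have hconc : ConcaveOn ℝ (Set.Icc (0 : ℝ) s⁻¹) (F ∘ z) := by
    apply AntitoneOn.concaveOn_of_deriv (convex_Icc _ _)
    · exact fun t ht => (hderiv t ht).differentiableWithinAt.continuousWithinAt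
    · rw [hint]
      intro t ht
      exact (((hderiv t (Set.Ioo_subset_Icc_self ht)).hasDerivAt
        (Icc_mem_nhds ht.1 ht.2)).differentiableAt).differentiableWithinAt
    · rw [hint]
      intro a ha b hb hab
      have hda : deriv (F ∘ z) a = inner ℝ (gradF (z a)) u :=
        ((hderiv a (Set.Ioo_subset_Icc_self ha)).hasDerivAt
          (Icc_mem_nhds ha.1 ha.2)).deriv
      have hdb : deriv (F ∘ z) b = inner ℝ (gradF (z b)) u :=
        ((hderiv b (Set.Ioo_subset_Icc_self hb)).hasDerivAt
          (Icc_mem_nhds hb.1 hb.2)).deriv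
      rw [hda, hdb]
      have hzab : ∀ i, z a i ≤ z b i := by
        intro i
        rw [hzapp, hzapp]
        have := mul_le_mul_of_nonneg_right hab (hu0 i)
        linarith
      have hgr : ∀ i, gradF (z b) i ≤ gradF (z a) i :=
        hDR (z b) (hz b (Set.Ioo_subset_Icc_self hb))
          (z a) (hz a (Set.Ioo_subset_Icc_self ha)) hzab
      rw [PiLp.inner_apply, PiLp.inner_apply]
      apply Finset.sum_le_sum
      intro i _
      simp only [RCLike.inner_apply, conj_trivial]
      exact mul_le_mul_of_nonneg_left (hgr i) (hu0 i)
  -- apply concavity at the points 0 and s⁻¹ with weights (1-s) and s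
  have h0mem : (0 : ℝ) ∈ Set.Icc (0 : ℝ) s⁻¹ := ⟨le_refl _, hIcc.le⟩
  have hcmem : s⁻¹ ∈ Set.Icc (0 : ℝ) s⁻¹ := ⟨hIcc.le, le_refl _⟩
  have hkey := hconc.2 h0mem hcmem (by linarith : (0:ℝ) ≤ 1 - s) hs0 (by ring)
  have hcomb : (1 - s) • (0 : ℝ) + s • s⁻¹ = 1 := by
    field_simp
    simp [hspos.ne']
  rw [hcomb] at hkey
  have hz0 : z 0 = y := by
    ext i
    rw [hzapp]; ring
  have hz1 : z 1 = (WithLp.toLp 2 (fun i => max (x i) (y i)) : EuclideanSpace ℝ (Fin n)) := by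
    ext i
    rw [hzapp]
    simp [hu]
  have hFc : 0 ≤ F (z s⁻¹) := hF0 _ (hz s⁻¹ hcmem)
  have : (1 - s) * F (z 0) + s * F (z s⁻¹) ≤ F (z 1) := by
    simpa [smul_eq_mul] using hkey
  rw [hz0, hz1] at this
  nlinarith [mul_nonneg hs0 hFc]
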